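/- An irreducible Markov chain on the nonnegative integers is recurrent if there exists N >= 1 such that the mean drift gamma_i is nonpositive for all states i >= N. -/

import Mathlib

open scoped ENNReal BigOperators
open Filter

/-- A discrete-time Markov chain on the nonnegative integers, given by its
row-stochastic transition matrix. -/
structure MarkovChain where
  p : ℕ → ℕ → ℝ≥0∞
  row_sum : ∀ i, ∑' j, p i j = 1

namespace MarkovChain

/-- `n`-step transition probabilities. -/
noncomputable def step (M : MarkovChain) : ℕ → ℕ → ℕ → ℝ≥0∞
  | 0, i, j => if i = j then 1 else 0
  | (n+1), i, j => ∑' k, M.p i k * M.step n k j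

/-- Irreducibility: every state reaches every other state with positive probability. -/
def Irreducible (M : MarkovChain) : Prop := ∀ i j, ∃ n, 0 < M.step n i j

/-- Probability, starting from `j`, that the chain reaches state `i` for the first
time at time `n` (time `0` counts iff `j = i`). -/
noncomputable def hitAt (M : MarkovChain) (i : ℕ) : ℕ → ℕ → ℝ≥0∞
  | 0, j => if j = i then 1 else 0
  | (n+1), j => if j = i then 0 else ∑' k, M.p j k * M.hitAt i n k

/-- Probability that the first return to `i` occurs at time `n + 1`. -/
noncomputable def firstReturn (M : MarkovChain) (i n : ℕ) : ℝ≥0∞ :=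
  ∑' k, M.p i k * M.hitAt i n k

/-- The chain is recurrent: return to each state is almost sure. -/
def Recurrent (M : MarkovChain) : Prop := ∀ i, ∑' n, M.firstReturn i n = 1

/-- The chain is positive recurrent: recurrent with finite expected return times. -/
def PositiveRecurrent (M : MarkovChain) : Prop :=
  M.Recurrent ∧ ∀ i, ∑' n : ℕ, ((n : ℝ≥0∞) + 1) * M.firstReturn i n < ⊤

/-- Null recurrent: recurrent but not positive recurrent. -/
def NullRecurrent (M : MarkovChain) : Prop := M.Recurrent ∧ ¬ M.PositiveRecurrent

/-- The chain is transient: return to each state happens with probability `< 1`. -/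
def Transient (M : MarkovChain) : Prop := ∀ i, ∑' n, M.firstReturn i n < 1

/-- Mean drift at state `i`. -/
noncomputable def drift (M : MarkovChain) (i : ℕ) : ℝ :=
  ∑' j, (M.p i j).toReal * ((j : ℝ) - i)

/-- The mean drift at `i` is finite (well-defined). -/
def DriftFinite (M : MarkovChain) (i : ℕ) : Prop :=
  Summable fun j => (M.p i j).toReal * ((j : ℝ) - i)

/-- Second-moment drift at state `i`. -/
noncomputable def secondMoment (M : MarkovChain) (i : ℕ) : ℝ :=
  ∑' j, (M.p i j).toReal * ((j : ℝ) - i) ^ 2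

/-- Downward uniformly bounded with bound `k`: no downward jumps longer than `k`. -/
def DownwardBounded (M : MarkovChain) (k : ℕ) : Prop :=
  ∀ i j, j + k < i → M.p i j = 0

/-- Uniformly bounded with bound `d`: no jumps longer than `d`. -/
def UniformlyBounded (M : MarkovChain) (d : ℕ) : Prop :=
  ∀ i j : ℕ, (d : ℤ) < |(i : ℤ) - j| → M.p i j = 0

end MarkovChain

namespace MarkovChain

variable (M : MarkovChain)

lemma p_le_one (j k : ℕ) : M.p j k ≤ 1 := (M.row_sum j) ▸ ENNReal.le_tsum k

lemma p_ne_top (j k : ℕ) : M.p j k ≠ ⊤ := ((M.p_le_one j k).trans_lt ENNReal.one_lt_top).ne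

lemma step_row_sum : ∀ n i, ∑' j, M.step n i j = 1
  | 0, i => by
      rw [tsum_eq_single i (fun b hb => by simp [step, Ne.symm hb])]
      simp [step]
  | (n+1), i => by
      simp only [step]
      rw [ENNReal.tsum_comm]
      calc ∑' k, ∑' (j:ℕ), M.p i k * M.step n k j
          = ∑' k, M.p i k * ∑' (j:ℕ), M.step n k j := by
            congr 1; ext k; rw [ENNReal.tsum_mul_left]
        _ = 1 := by simp [step_row_sum n, M.row_sum i]

lemma step_le_one (n i j : ℕ) : M.step n i j ≤ 1 :=
  (M.step_row_sum n i) ▸ ENNReal.le_tsum j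

/-- survival: probability of avoiding `A` at all times `0..n`. -/
noncomputable def SS (A : ℕ → Prop) [DecidablePred A] : ℕ → ℕ → ℝ≥0∞
  | 0, j => if A j then 0 else 1
  | (n+1), j => if A j then 0 else ∑' m, M.p j m * SS A n m

/-- survive `A` through time `n` and end at `k`. -/
noncomputable def DD (A : ℕ → Prop) [DecidablePred A] : ℕ → ℕ → ℕ → ℝ≥0∞
  | 0, j, k => if ¬ A j ∧ j = k then 1 else 0
  | (n+1), j, k => if A j then 0 else ∑' m, M.p j m * DD A n m k

/-- first entry of `A` at time `n`, at state `k`. -/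
noncomputable def FF (A : ℕ → Prop) [DecidablePred A] : ℕ → ℕ → ℕ → ℝ≥0∞
  | 0, j, k => if A j ∧ j = k then 1 else 0
  | (n+1), j, k => if A j then 0 else ∑' m, M.p j m * FF A n m k

variable (A : ℕ → Prop) [DecidablePred A]

lemma SS_of_mem {j : ℕ} (h : A j) : ∀ n, M.SS A n j = 0
  | 0 => by simp [SS, h]
  | (n+1) => by simp [SS, h]

lemma SS_le_one : ∀ n j, M.SS A n j ≤ 1
  | 0, j => by by_cases h : A j <;> simp [SS, h]
  | (n+1), j => by
      by_cases h : A j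
      · simp [SS, h]
      · simp only [SS, if_neg h]
        calc ∑' m, M.p j m * M.SS A n m ≤ ∑' m, M.p j m * 1 :=
              ENNReal.tsum_le_tsum fun m => mul_le_mul_right (SS_le_one n m) _
          _ = 1 := by simp [M.row_sum j]

lemma SS_ne_top (n j : ℕ) : M.SS A n j ≠ ⊤ :=
  ((M.SS_le_one A n j).trans_lt ENNReal.one_lt_top).ne

lemma SS_anti : ∀ n j, M.SS A (n+1) j ≤ M.SS A n j
  | 0, j => by
      by_cases h : A j
      · simp [SS, h]
      · simpa [SS, h] using (M.SS_le_one A 1 j)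
  | (n+1), j => by
      by_cases h : A j
      · simp [SS, h]
      · simp only [SS, if_neg h]
        exact ENNReal.tsum_le_tsum fun m => mul_le_mul_right (SS_anti n m) _

lemma SS_antitone (j : ℕ) : Antitone (fun n => M.SS A n j) :=
  antitone_nat_of_succ_le fun n => M.SS_anti A n j

lemma DD_of_mem {j : ℕ} (h : A j) : ∀ n k, M.DD A n j k = 0
  | 0, k => by simp [DD, h]
  | (n+1), k => by simp [DD, h]

lemma SS_eq_tsum_DD : ∀ n j, M.SS A n j = ∑' k, M.DD A n j k
  | 0, j => by
      by_cases h : A j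
      · simp [SS, DD, h]
      · rw [tsum_eq_single j (fun b hb => by simp [DD, Ne.symm hb])]
        simp [SS, DD, h]
  | (n+1), j => by
      by_cases h : A j
      · simp [SS, DD, h]
      · simp only [SS, DD, if_neg h]
        rw [ENNReal.tsum_comm]
        congr 1; ext m
        rw [ENNReal.tsum_mul_left, SS_eq_tsum_DD n m]


lemma SS_add : ∀ n m j, M.SS A (n + m) j = ∑' l, M.DD A n j l * M.SS A m l
  | 0, m, j => by
      rw [tsum_eq_single j (fun b hb => by simp [DD, Ne.symm hb])]
      by_cases h : A j
      · simp [DD, h, M.SS_of_mem A h]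
      · simp [DD, h]
  | (n+1), m, j => by
      by_cases h : A j
      · simp [M.SS_of_mem A h, M.DD_of_mem A h]
      · rw [show n+1+m = (n+m)+1 from by ring]
        calc M.SS A ((n+m)+1) j = ∑' mm, M.p j mm * M.SS A (n+m) mm := by
              simp only [SS, if_neg h]
          _ = ∑' mm, ∑' l, M.p j mm * (M.DD A n mm l * M.SS A m l) := by
              congr 1; ext mm
              rw [SS_add n m mm, ENNReal.tsum_mul_left]
          _ = ∑' l, (∑' mm, M.p j mm * M.DD A n mm l) * M.SS A m l := by
              rw [ENNReal.tsum_comm]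
              congr 1; ext l
              rw [← ENNReal.tsum_mul_right]
              congr 1; ext mm; ring
          _ = ∑' l, M.DD A (n+1) j l * M.SS A m l := by
              simp only [DD, if_neg h]

lemma FF_target : ∀ n j k, ¬ A k → M.FF A n j k = 0
  | 0, j, k, h => by
      by_cases hj : A j
      · simp [FF]; rintro h1 rfl; exact h h1
      · simp [FF, hj]
  | (n+1), j, k, h => by
      by_cases hj : A j
      · simp [FF, hj]
      · simp only [FF, if_neg hj]
        simp [fun m => FF_target n m k h]

lemma first_passage : ∀ n j,
    (∑ t ∈ Finset.range (n+1), ∑' k, M.FF A t j k) + M.SS A n j = 1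
  | 0, j => by
      rw [Finset.sum_range_one,
        tsum_eq_single j (fun b hb => by simp [FF, Ne.symm hb])]
      by_cases h : A j <;> simp [FF, SS, h]
  | (n+1), j => by
      rw [Finset.sum_range_succ']
      by_cases h : A j
      · rw [tsum_eq_single j (fun b hb => by simp [FF, Ne.symm hb])]
        have : ∀ t, ∑' k, M.FF A (t+1) j k = 0 := fun t => by simp [FF, h]
        simp [FF, h, this, M.SS_of_mem A h]
      · have h0 : ∑' k, M.FF A 0 j k = 0 := by simp [FF, h]
        rw [h0, add_zero]
        have hstep : ∀ t, ∑' k, M.FF A (t+1) j k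
            = ∑' mm, M.p j mm * ∑' k, M.FF A t mm k := by
          intro t
          simp only [FF, if_neg h]
          rw [ENNReal.tsum_comm]
          congr 1; ext mm
          rw [ENNReal.tsum_mul_left]
        calc (∑ t ∈ Finset.range (n+1), ∑' k, M.FF A (t+1) j k) + M.SS A (n+1) j
            = (∑ t ∈ Finset.range (n+1), ∑' mm, M.p j mm * ∑' k, M.FF A t mm k)
              + ∑' mm, M.p j mm * M.SS A n mm := by
              rw [Finset.sum_congr rfl (fun t _ => hstep t)]
              simp only [SS, if_neg h]
          _ = ∑' mm, ((∑ t ∈ Finset.range (n+1), M.p j mm * ∑' k, M.FF A t mm k)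
              + M.p j mm * M.SS A n mm) := by
              rw [ENNReal.tsum_add, Summable.tsum_finsetSum (fun i _ => ENNReal.summable)]
          _ = ∑' mm, M.p j mm *
              ((∑ t ∈ Finset.range (n+1), ∑' k, M.FF A t mm k) + M.SS A n mm) := by
              congr 1; ext mm
              rw [mul_add, Finset.mul_sum]
          _ = 1 := by
              simp only [fun mm => first_passage n mm, mul_one, M.row_sum j]

lemma step_add_SS_le (a : ℕ) (ha : A a) : ∀ n k, M.step n k a + M.SS A n k ≤ 1
  | 0, k => by
      by_cases hk : k = a
      · subst hk; simp [step, M.SS_of_mem A ha]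
      · simp only [step, if_neg (fun hh : k = a => hk hh), zero_add]
        exact M.SS_le_one A 0 k
  | (n+1), k => by
      by_cases hk : A k
      · simp only [M.SS_of_mem A hk, add_zero]
        exact M.step_le_one (n+1) k a
      · simp only [step, SS, if_neg hk, ← ENNReal.tsum_add]
        calc ∑' m, (M.p k m * M.step n m a + M.p k m * M.SS A n m)
            = ∑' m, M.p k m * (M.step n m a + M.SS A n m) := by
              congr 1; ext m; rw [mul_add]
          _ ≤ ∑' m, M.p k m * 1 :=
              ENNReal.tsum_le_tsum fun m =>
                mul_le_mul_right (step_add_SS_le a ha n m) _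
          _ = 1 := by simp [M.row_sum k]


/-- Conversion of the real drift condition to an `ℝ≥0∞` mean inequality. -/
lemma mean_le (l : ℕ) (hfin : Summable fun k : ℕ => (M.p l k).toReal * ((k:ℝ) - l))
    (hd : (∑' k : ℕ, (M.p l k).toReal * ((k:ℝ) - l)) ≤ 0) :
    ∑' k : ℕ, M.p l k * (k : ℝ≥0∞) ≤ (l : ℝ≥0∞) := by
  have hp : Summable fun k : ℕ => (M.p l k).toReal := by
    apply ENNReal.summable_toReal
    rw [M.row_sum l]; exact ENNReal.one_ne_top
  have hsum_p : ∑' k : ℕ, (M.p l k).toReal = 1 := by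
    rw [← ENNReal.tsum_toReal_eq (fun k => M.p_ne_top l k), M.row_sum l, ENNReal.toReal_one]
  set g : ℕ → ℝ := fun k => (M.p l k).toReal * k with hg
  have hgsummable : Summable g := by
    have : g = (fun k => (M.p l k).toReal * ((k:ℝ) - l)) + fun k => (M.p l k).toReal * l := by
      funext k; simp [hg]; ring
    rw [this]
    exact hfin.add (hp.mul_right _)
  have hgsum : ∑' k, g k ≤ (l : ℝ) := by
    have : ∑' k, g k = (∑' k : ℕ, (M.p l k).toReal * ((k:ℝ) - l))
        + ∑' k : ℕ, (M.p l k).toReal * l := by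
      rw [← Summable.tsum_add hfin (hp.mul_right _)]
      congr 1; funext k; simp [hg]; ring
    rw [this, tsum_mul_right, hsum_p]
    linarith
  have hterm : ∀ k : ℕ, M.p l k * (k : ℝ≥0∞) = ENNReal.ofReal (g k) := by
    intro k
    rw [hg]
    rw [ENNReal.ofReal_mul ENNReal.toReal_nonneg, ENNReal.ofReal_toReal (M.p_ne_top l k),
      ENNReal.ofReal_natCast]
  calc ∑' k : ℕ, M.p l k * (k : ℝ≥0∞) = ∑' k, ENNReal.ofReal (g k) := by
        congr 1; funext k; exact hterm k
    _ = ENNReal.ofReal (∑' k, g k) :=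
        (ENNReal.ofReal_tsum_of_nonneg
          (fun k => mul_nonneg ENNReal.toReal_nonneg (Nat.cast_nonneg k)) hgsummable).symm
    _ ≤ ENNReal.ofReal (l : ℝ) := ENNReal.ofReal_le_ofReal hgsum
    _ = (l : ℝ≥0∞) := ENNReal.ofReal_natCast l

/-- Lyapunov estimate: the expected position of the surviving mass is at most the start. -/
lemma lyapunov (hA : ∀ l, ¬ A l → ∑' k : ℕ, M.p l k * (k : ℝ≥0∞) ≤ (l : ℝ≥0∞)) :
    ∀ n j, ∑' k : ℕ, M.DD A n j k * (k : ℝ≥0∞) ≤ (j : ℝ≥0∞)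
  | 0, j => by
      rw [tsum_eq_single j (fun b hb => by simp [DD, Ne.symm hb])]
      by_cases h : A j <;> simp [DD, h]
  | (n+1), j => by
      by_cases h : A j
      · simp [M.DD_of_mem A h]
      · calc ∑' k : ℕ, M.DD A (n+1) j k * (k : ℝ≥0∞)
            = ∑' k, ∑' m, M.p j m * M.DD A n m k * (k:ℝ≥0∞) := by
              simp only [DD, if_neg h]
              congr 1; funext k
              rw [ENNReal.tsum_mul_right]
          _ = ∑' m, M.p j m * ∑' k, M.DD A n m k * (k:ℝ≥0∞) := by
              rw [ENNReal.tsum_comm]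
              congr 1; funext m
              rw [← ENNReal.tsum_mul_left]
              congr 1; funext k; ring
          _ ≤ ∑' m, M.p j m * (m : ℝ≥0∞) :=
              ENNReal.tsum_le_tsum fun m => mul_le_mul_right (lyapunov hA n m) _
          _ ≤ (j : ℝ≥0∞) := hA j h

lemma tail_bound (hA : ∀ l, ¬ A l → ∑' k : ℕ, M.p l k * (k : ℝ≥0∞) ≤ (l : ℝ≥0∞))
    (L : ℕ) (n j : ℕ) :
    (L : ℝ≥0∞) * ∑' k : ℕ, (if L ≤ k then M.DD A n j k else 0) ≤ (j : ℝ≥0∞) := by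
  rw [← ENNReal.tsum_mul_left]
  refine le_trans (ENNReal.tsum_le_tsum fun k => ?_) (M.lyapunov A hA n j)
  by_cases hk : L ≤ k
  · simp only [if_pos hk]
    rw [mul_comm]
    exact mul_le_mul_right (by exact_mod_cast hk) _
  · simp [if_neg hk]

/-- Dominated convergence for antitone sequences in `ℝ≥0∞`. -/
lemma dc {ι : Type*} (g : ι → ℝ≥0∞) (hg : ∑' i, g i ≤ 1)
    (T : ℕ → ι → ℝ≥0∞) (hT1 : ∀ n i, T n i ≤ 1)
    (hanti : ∀ i, Antitone fun n => T n i) :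
    ⨅ n, ∑' i, g i * T n i ≤ ∑' i, g i * ⨅ n, T n i := by
  classical
  refine ENNReal.le_of_forall_pos_le_add fun ε hε _ => ?_
  set u : ι → ℝ≥0∞ := fun i => ⨅ n, T n i with hu
  have hgfin : ∑' i, g i ≠ ⊤ := (hg.trans_lt ENNReal.one_lt_top).ne
  have hhalf : (0:ℝ≥0∞) < (ε:ℝ≥0∞)/2 := by
    apply ENNReal.div_pos (by exact_mod_cast hε.ne') (by norm_num)
  obtain ⟨F, hF⟩ := ((ENNReal.tendsto_tsum_compl_atTop_zero hgfin).eventually_lt_const hhalf).exists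
  have hex : ∀ i, ∃ n, T n i ≤ u i + (ε:ℝ≥0∞)/2 := by
    intro i
    have : u i < u i + (ε:ℝ≥0∞)/2 :=
      ENNReal.lt_add_right (((iInf_le _ 0).trans (hT1 0 i)).trans_lt ENNReal.one_lt_top).ne
        hhalf.ne'
    obtain ⟨n, hn⟩ := iInf_lt_iff.mp this
    exact ⟨n, hn.le⟩
  set nf : ι → ℕ := fun i => (hex i).choose with hnf
  set n0 : ℕ := F.sup nf with hn0
  have hTn0 : ∀ i ∈ F, T n0 i ≤ u i + (ε:ℝ≥0∞)/2 := fun i hi =>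
    le_trans (hanti i (Finset.le_sup hi)) (hex i).choose_spec
  have key : ∑' i, g i * T n0 i ≤ ∑' i, g i * u i + (ε:ℝ≥0∞) := by
    have hle : ∀ i, g i * T n0 i ≤
        (if i ∈ F then g i * (u i + (ε:ℝ≥0∞)/2) else 0) + (if i ∈ F then 0 else g i) := by
      intro i
      by_cases hi : i ∈ F
      · simp only [if_pos hi, add_zero]
        exact mul_le_mul_right (hTn0 i hi) _
      · simp only [if_neg hi, zero_add]
        exact mul_le_mul_right (hT1 _ i) _ |>.trans_eq (mul_one _)
    calc ∑' i, g i * T n0 i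
        ≤ ∑' i, ((if i ∈ F then g i * (u i + (ε:ℝ≥0∞)/2) else 0)
            + (if i ∈ F then 0 else g i)) := ENNReal.tsum_le_tsum hle
      _ = (∑' i, if i ∈ F then g i * (u i + (ε:ℝ≥0∞)/2) else 0)
            + ∑' i, (if i ∈ F then 0 else g i) := ENNReal.tsum_add
      _ ≤ (∑' i, g i * u i + (ε:ℝ≥0∞)/2) + (ε:ℝ≥0∞)/2 := by
          gcongr
          · rw [tsum_eq_sum (s := F) (fun b hb => by simp [if_neg hb])]
            calc ∑ i ∈ F, (if i ∈ F then g i * (u i + (ε:ℝ≥0∞)/2) else 0)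
                = ∑ i ∈ F, (g i * u i + g i * ((ε:ℝ≥0∞)/2)) := by
                  refine Finset.sum_congr rfl fun i hi => ?_
                  rw [if_pos hi, mul_add]
              _ = (∑ i ∈ F, g i * u i) + (∑ i ∈ F, g i) * ((ε:ℝ≥0∞)/2) := by
                  rw [Finset.sum_add_distrib, Finset.sum_mul]
              _ ≤ ∑' i, g i * u i + (ε:ℝ≥0∞)/2 := by
                  gcongr
                  · exact ENNReal.sum_le_tsum F
                  · calc (∑ i ∈ F, g i) * ((ε:ℝ≥0∞)/2)
                        ≤ 1 * ((ε:ℝ≥0∞)/2) :=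
                          mul_le_mul_left ((ENNReal.sum_le_tsum F).trans hg) _
                      _ = (ε:ℝ≥0∞)/2 := one_mul _
          · have h1 : (∑' i, if i ∈ F then 0 else g i)
                = ∑' i, Set.indicator {x : ι | x ∉ F} g i := by
              congr 1; funext i
              by_cases hi : i ∈ F <;> simp [Set.indicator, hi]
            have h2 : (∑' i, Set.indicator {x : ι | x ∉ F} g i)
                = ∑' (i : {x // x ∉ F}), g ↑i := (tsum_subtype _ _).symm
            rw [h1, h2]
            exact hF.le
      _ = ∑' i, g i * u i + (ε:ℝ≥0∞) := by
          rw [add_assoc, ENNReal.add_halves]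
  exact le_trans (iInf_le _ n0) key


lemma SS_lt_one_of_reach {k : ℕ} (h : ∃ n a, A a ∧ 0 < M.step n k a) :
    ∃ n, M.SS A n k < 1 := by
  obtain ⟨n, a, ha, hs⟩ := h
  refine ⟨n, ?_⟩
  calc M.SS A n k < M.SS A n k + M.step n k a :=
        ENNReal.lt_add_right (M.SS_ne_top A n k) hs.ne'
    _ ≤ 1 := by rw [add_comm]; exact M.step_add_SS_le A a ha n k

/-- Main estimate of "Argument 1": if the Lyapunov bound holds off `A` and `A` is
reachable from everywhere, then `A` is hit almost surely. -/
lemma iInf_SS_zero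
    (hA : ∀ l, ¬ A l → ∑' k : ℕ, M.p l k * (k : ℝ≥0∞) ≤ (l : ℝ≥0∞))
    (hreach : ∀ k, ∃ n a, A a ∧ 0 < M.step n k a) (j : ℕ) :
    ⨅ n, M.SS A n j = 0 := by
  set w := ⨅ n, M.SS A n j with hw
  have hwle : w ≤ 1 := (iInf_le _ 0).trans (M.SS_le_one A 0 j)
  have hwtop : w ≠ ⊤ := (hwle.trans_lt ENNReal.one_lt_top).ne
  -- main bound : for every L ≥ 1, w ≤ j / L
  have main : ∀ L : ℕ, 1 ≤ L → w ≤ (j : ℝ≥0∞) / L := by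
    intro L hL
    have hm' : ∀ k : ℕ, ∃ n, M.SS A n k < 1 := fun k => M.SS_lt_one_of_reach A (hreach k)
    set m := (Finset.range L).sup (fun k => (hm' k).choose) with hmdef
    set c := (Finset.range L).sup (fun k => M.SS A m k) with hcdef
    have hc1 : c < 1 := by
      rw [hcdef, Finset.sup_lt_iff (by norm_num : (⊥:ℝ≥0∞) < 1)]
      intro k hk
      exact lt_of_le_of_lt
        (M.SS_antitone A k (Finset.le_sup (f := fun k => (hm' k).choose) hk))
        (hm' k).choose_spec
    have hcle : ∀ l, l < L → M.SS A m l ≤ c := fun l hl =>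
      Finset.le_sup (f := fun k => M.SS A m k) (Finset.mem_range.mpr hl)
    set ε := 1 - c with hε
    have hε0 : ε ≠ 0 := (tsub_pos_of_lt hc1).ne'
    have hεtop : ε ≠ ⊤ := ((tsub_le_self).trans_lt ENNReal.one_lt_top).ne
    have hcε : c + ε = 1 := add_tsub_cancel_of_le hc1.le
    set P : ℕ → ℝ≥0∞ := fun n => ∑' l, if l < L then M.DD A n j l else 0 with hP
    set Q : ℕ → ℝ≥0∞ := fun n => ∑' l, if L ≤ l then M.DD A n j l else 0 with hQ
    have hPQ : ∀ n, P n + Q n = M.SS A n j := by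
      intro n
      rw [hP, hQ, ← ENNReal.tsum_add, M.SS_eq_tsum_DD A n j]
      congr 1; funext l
      by_cases hl : l < L
      · simp [hl, Nat.not_le.mpr hl]
      · simp [hl, Nat.le_of_not_lt hl]
    have hQle : ∀ n, Q n ≤ (j : ℝ≥0∞) / L := by
      intro n
      have hL0 : (L : ℝ≥0∞) ≠ 0 := by
        have : L ≠ 0 := by omega
        exact_mod_cast this
      rw [ENNReal.le_div_iff_mul_le (Or.inl hL0) (Or.inl (ENNReal.natCast_ne_top L))]
      rw [mul_comm]
      exact M.tail_bound A hA L n j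
    have key : ∀ n, M.SS A (n + m) j + ε * P n ≤ M.SS A n j := by
      intro n
      have h1 : M.SS A (n + m) j ≤ c * P n + Q n := by
        rw [M.SS_add A n m j]
        calc ∑' l, M.DD A n j l * M.SS A m l
            ≤ ∑' l, ((if l < L then M.DD A n j l else 0) * c
                + (if L ≤ l then M.DD A n j l else 0)) := by
              refine ENNReal.tsum_le_tsum fun l => ?_
              by_cases hl : l < L
              · simp only [if_pos hl, if_neg (Nat.not_le.mpr hl), add_zero]
                exact mul_le_mul_right (hcle l hl) _
              · simp only [if_neg hl, if_pos (Nat.le_of_not_lt hl), zero_mul, zero_add]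
                exact (mul_le_mul_right (M.SS_le_one A m l) _).trans_eq (mul_one _)
          _ = c * P n + Q n := by
              rw [ENNReal.tsum_add, ENNReal.tsum_mul_right, mul_comm]
      calc M.SS A (n + m) j + ε * P n ≤ (c * P n + Q n) + ε * P n :=
            add_le_add_left h1 _
        _ = (c + ε) * P n + Q n := by ring
        _ = P n + Q n := by rw [hcε, one_mul]
        _ = M.SS A n j := hPQ n
    -- conclude ε * w ≤ ε * (j / L)
    have hstep : ε * w ≤ ε * ((j:ℝ≥0∞) / L) := by
      refine ENNReal.le_of_forall_pos_le_add fun δ hδ hfin => ?_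
      have hδ0 : (0:ℝ≥0∞) < δ := by exact_mod_cast hδ
      have hwlt : w < w + δ := ENNReal.lt_add_right hwtop hδ0.ne'
      obtain ⟨n, hn⟩ := iInf_lt_iff.mp hwlt
      have hPn : ε * P n ≤ δ := by
        have h2 : w + ε * P n ≤ w + δ := by
          calc w + ε * P n ≤ M.SS A (n + m) j + ε * P n :=
                add_le_add_left (iInf_le _ _) _
            _ ≤ M.SS A n j := key n
            _ ≤ w + δ := hn.le
        exact (ENNReal.add_le_add_iff_left hwtop).mp h2
      calc ε * w ≤ ε * M.SS A n j := mul_le_mul_right (iInf_le _ n) _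
        _ = ε * (P n + Q n) := by rw [hPQ n]
        _ = ε * P n + ε * Q n := by rw [mul_add]
        _ ≤ δ + ε * ((j:ℝ≥0∞) / L) := add_le_add hPn (mul_le_mul_right (hQle n) _)
        _ = ε * ((j:ℝ≥0∞) / L) + δ := by rw [add_comm]
    exact (ENNReal.mul_le_mul_iff_right hε0 hεtop).mp hstep
  -- conclude w = 0
  by_contra hw0
  have hwpos : 0 < w := pos_iff_ne_zero.mpr hw0
  have hjw : (j : ℝ≥0∞) / w ≠ ⊤ := (ENNReal.div_lt_top (ENNReal.natCast_ne_top j) hw0).ne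
  obtain ⟨L0, hL0⟩ := ENNReal.exists_nat_gt hjw
  have hL : (1:ℕ) ≤ L0 + 1 := Nat.le_add_left 1 L0
  have h1 : w ≤ (j : ℝ≥0∞) / (L0 + 1 : ℕ) := main (L0+1) hL
  have h2 : (j : ℝ≥0∞) / (L0 + 1 : ℕ) < w := by
    rw [ENNReal.div_lt_iff (Or.inl (by exact_mod_cast Nat.succ_ne_zero L0))
      (Or.inl (ENNReal.natCast_ne_top _))]
    calc (j:ℝ≥0∞) = (j:ℝ≥0∞) / w * w := by
          rw [ENNReal.div_mul_cancel hw0 hwtop]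
      _ < (L0:ℝ≥0∞) * w := by
          exact ENNReal.mul_lt_mul_iff_left hw0 hwtop |>.mpr hL0
      _ ≤ w * (((L0+1:ℕ)):ℝ≥0∞) := by
          rw [mul_comm]
          gcongr
          exact_mod_cast Nat.le_succ L0
  exact absurd (h1.trans_lt h2) (lt_irrefl w)


/-- Decomposition of survival of `B ⊆ A` by the first entry into `A`. -/
lemma SS_le_decomp (B : ℕ → Prop) [DecidablePred B] (hBA : ∀ x, B x → A x) :
    ∀ n j, M.SS B n j ≤ M.SS A n j
      + ∑ t ∈ Finset.range (n+1), ∑' k, M.FF A t j k * M.SS B (n - t) k := by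
  have single : ∀ n j, A j → (∑' k, M.FF A 0 j k * M.SS B n k) = M.SS B n j := by
    intro n j hj
    rw [tsum_eq_single j (fun b hb => by simp [FF, Ne.symm hb])]
    simp [FF, hj]
  intro n
  induction n with
  | zero =>
      intro j
      by_cases h : A j
      · rw [Finset.sum_range_one, single 0 j h]
        exact le_add_self
      · have hB : ¬ B j := fun hb => h (hBA j hb)
        simp only [SS, if_neg h, if_neg hB]
        exact le_add_right le_rfl
  | succ n IH =>
      intro j
      by_cases h : A j
      · calc M.SS B (n+1) j = ∑' k, M.FF A 0 j k * M.SS B (n+1-0) k := by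
              rw [Nat.sub_zero, single (n+1) j h]
          _ ≤ ∑ t ∈ Finset.range (n+2), ∑' k, M.FF A t j k * M.SS B (n+1-t) k := by
              rw [Finset.sum_range_succ']
              exact le_add_left le_rfl
          _ ≤ _ := le_add_self
      · have hB : ¬ B j := fun hb => h (hBA j hb)
        have swap : ∀ t, (∑' mm, M.p j mm * ∑' k, M.FF A t mm k * M.SS B (n-t) k)
            = ∑' k, M.FF A (t+1) j k * M.SS B (n-t) k := by
          intro t
          calc ∑' mm, M.p j mm * ∑' k, M.FF A t mm k * M.SS B (n-t) k
              = ∑' mm, ∑' k, M.p j mm * (M.FF A t mm k * M.SS B (n-t) k) := by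
                congr 1; funext mm; rw [ENNReal.tsum_mul_left]
            _ = ∑' k, (∑' mm, M.p j mm * M.FF A t mm k) * M.SS B (n-t) k := by
                rw [ENNReal.tsum_comm]
                congr 1; funext k
                rw [← ENNReal.tsum_mul_right]
                congr 1; funext mm; ring
            _ = ∑' k, M.FF A (t+1) j k * M.SS B (n-t) k := by
                simp only [FF, if_neg h]
        calc M.SS B (n+1) j = ∑' mm, M.p j mm * M.SS B n mm := by
              simp only [SS, if_neg hB]
          _ ≤ ∑' mm, (M.p j mm * M.SS A n mm
              + M.p j mm * ∑ t ∈ Finset.range (n+1), ∑' k, M.FF A t mm k * M.SS B (n-t) k) := by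
              refine ENNReal.tsum_le_tsum fun mm => ?_
              rw [← mul_add]
              exact mul_le_mul_right (IH mm) _
          _ = (∑' mm, M.p j mm * M.SS A n mm)
              + ∑' mm, M.p j mm * ∑ t ∈ Finset.range (n+1), ∑' k, M.FF A t mm k * M.SS B (n-t) k :=
              ENNReal.tsum_add
          _ = M.SS A (n+1) j
              + ∑ t ∈ Finset.range (n+1), ∑' mm, M.p j mm * ∑' k, M.FF A t mm k * M.SS B (n-t) k := by
              congr 1
              · simp only [SS, if_neg h]
              · rw [← Summable.tsum_finsetSum (fun i _ => ENNReal.summable)]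
                congr 1; funext mm
                rw [Finset.mul_sum]
          _ = M.SS A (n+1) j
              + ∑ t ∈ Finset.range (n+1), ∑' k, M.FF A (t+1) j k * M.SS B (n+1-(t+1)) k := by
              congr 1
              refine Finset.sum_congr rfl fun t ht => ?_
              rw [Nat.succ_sub_succ]
              exact swap t
          _ ≤ M.SS A (n+1) j
              + ∑ t ∈ Finset.range (n+2), ∑' k, M.FF A t j k * M.SS B (n+1-t) k := by
              gcongr
              conv_rhs => rw [Finset.sum_range_succ']
              exact le_add_right le_rfl

/-- The first-passage mass in a time window after `n` is at most the survival at `n`. -/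
lemma FF_block_le (n m j : ℕ) :
    (∑ t ∈ Finset.Ico (n+1) (n+1+m), ∑' k, M.FF A t j k) ≤ M.SS A n j := by
  have h1 := M.first_passage A n j
  have h2 := M.first_passage A (n + m) j
  rw [Finset.range_eq_Ico] at h1 h2
  have hsplit : (∑ t ∈ Finset.Ico 0 (n+1), ∑' k, M.FF A t j k)
      + ∑ t ∈ Finset.Ico (n+1) (n+1+m), ∑' k, M.FF A t j k
      = ∑ t ∈ Finset.Ico 0 (n+m+1), ∑' k, M.FF A t j k := by
    rw [Finset.sum_Ico_consecutive _ (Nat.zero_le _) (by omega), show n+1+m = n+m+1 from by omega]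
  have hfin : (∑ t ∈ Finset.Ico 0 (n+1), ∑' k, M.FF A t j k) ≠ ⊤ := by
    refine ne_top_of_le_ne_top ENNReal.one_ne_top ?_
    rw [← h1]
    exact le_add_right le_rfl
  have : (∑ t ∈ Finset.Ico 0 (n+1), ∑' k, M.FF A t j k)
      + (∑ t ∈ Finset.Ico (n+1) (n+1+m), ∑' k, M.FF A t j k) + M.SS A (n+m) j
      = (∑ t ∈ Finset.Ico 0 (n+1), ∑' k, M.FF A t j k) + M.SS A n j := by
    rw [hsplit, h2, h1]
  rw [add_assoc] at this
  have := (ENNReal.add_right_inj hfin).mp this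
  calc (∑ t ∈ Finset.Ico (n+1) (n+1+m), ∑' k, M.FF A t j k)
      ≤ _ + M.SS A (n+m) j := le_add_right le_rfl
    _ = M.SS A n j := this


lemma iInf_SS_single_zero (N : ℕ) (hN : 1 ≤ N)
    (hmean : ∀ l, N ≤ l → ∑' k : ℕ, M.p l k * (k:ℝ≥0∞) ≤ (l:ℝ≥0∞))
    (hreach : ∀ k a : ℕ, ∃ n, 0 < M.step n k a) (i : ℕ) (j0 : ℕ) :
    ⨅ n, M.SS (· = i) n j0 = 0 := by
  classical
  set K := max N (i+1) with hK
  set A : ℕ → Prop := fun x => x < K with hA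
  set B : ℕ → Prop := fun x => x = i with hB
  have hBA : ∀ x, B x → A x := by
    intro x hx
    have hx' : x = i := hx
    subst hx'
    show x < K
    omega
  have hAly : ∀ l, ¬ A l → ∑' k : ℕ, M.p l k * (k:ℝ≥0∞) ≤ (l:ℝ≥0∞) := by
    intro l hl
    refine hmean l ?_
    have : ¬ l < K := hl
    omega
  have hAreach : ∀ k, ∃ n a, A a ∧ 0 < M.step n k a := by
    intro k
    obtain ⟨n, hn⟩ := hreach k i
    exact ⟨n, i, by show i < K; omega, hn⟩
  have hAzero : ∀ j, ⨅ n, M.SS A n j = 0 := M.iInf_SS_zero A hAly hAreach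
  set u : ℕ → ℝ≥0∞ := fun k => ⨅ n, M.SS B n k with hu
  have hu1 : ∀ k, u k ≤ 1 := fun k => (iInf_le _ 0).trans (M.SS_le_one B 0 k)
  set s : ℝ≥0∞ := ⨆ k, u k with hs
  have hs1 : s ≤ 1 := iSup_le hu1
  have hstop : s ≠ ⊤ := (hs1.trans_lt ENNReal.one_lt_top).ne
  set sA : ℝ≥0∞ := (Finset.range K).sup u with hsA
  -- Step A : every starting point avoids i forever with probability at most sA
  have stepA : ∀ j, u j ≤ sA := by
    intro j
    have key : ∀ n : ℕ, u j ≤ sA + 2 * M.SS A n j := by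
      intro n
      set g : ℕ × ℕ → ℝ≥0∞ := fun p => if p.1 ≤ n then M.FF A p.1 j p.2 else 0 with hg
      set T : ℕ → ℕ × ℕ → ℝ≥0∞ := fun m p => M.SS B ((n - p.1) + m) p.2 with hT
      have hgITE : ∀ t : ℕ, (∑' k, g (t, k)) = if t ≤ n then ∑' k, M.FF A t j k else 0 := by
        intro t; by_cases ht : t ≤ n <;> simp [hg, ht]
      have hgsum : ∑' p, g p ≤ 1 := by
        rw [ENNReal.tsum_prod', tsum_congr hgITE,
          tsum_eq_sum (s := Finset.range (n+1))
            (fun t ht => by rw [if_neg (by simpa using ht)])]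
        calc ∑ t ∈ Finset.range (n+1), (if t ≤ n then ∑' k, M.FF A t j k else 0)
            = ∑ t ∈ Finset.range (n+1), ∑' k, M.FF A t j k :=
              Finset.sum_congr rfl fun t ht =>
                if_pos (by rw [Finset.mem_range] at ht; omega)
          _ ≤ 1 := by
              rw [← M.first_passage A n j]
              exact le_add_right le_rfl
      have hT1 : ∀ m p, T m p ≤ 1 := fun m p => M.SS_le_one B _ _
      have hTanti : ∀ p, Antitone fun m => T m p := fun p a b hab =>
        M.SS_antitone B p.2 (Nat.add_le_add_left hab _)
      -- the inner part of the decomposition equals ∑' p, g p * T m p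
      have hpart : ∀ m : ℕ,
          (∑ t ∈ Finset.range (n+1), ∑' k, M.FF A t j k * M.SS B (n + m - t) k)
          = ∑' p : ℕ × ℕ, g p * T m p := by
        intro m
        rw [ENNReal.tsum_prod']
        rw [tsum_eq_sum (s := Finset.range (n+1))
          (fun t ht => by
            have ht' : ¬ t ≤ n := by rw [Finset.mem_range] at ht; omega
            simp [hg, ht'])]
        refine Finset.sum_congr rfl fun t ht => ?_
        have ht' : t ≤ n := by rw [Finset.mem_range] at ht; omega
        congr 1
        funext k
        rw [hg, hT]
        simp only [if_pos ht']
        congr 2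
        omega
      have hm : ∀ m : ℕ, u j ≤ (∑' p, g p * T m p) + 2 * M.SS A n j := by
        intro m
        have d2 := M.SS_le_decomp A B hBA (n+m) j
        have hsplit : (∑ t ∈ Finset.range (n+m+1), ∑' k, M.FF A t j k * M.SS B (n+m-t) k)
            = (∑ t ∈ Finset.range (n+1), ∑' k, M.FF A t j k * M.SS B (n+m-t) k)
            + ∑ t ∈ Finset.Ico (n+1) (n+1+m), ∑' k, M.FF A t j k * M.SS B (n+m-t) k := by
          rw [Finset.range_eq_Ico, Finset.range_eq_Ico,
            Finset.sum_Ico_consecutive _ (Nat.zero_le _) (by omega : n+1 ≤ n+1+m),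
            show n+1+m = n+m+1 from by omega]
        have hpart2 : (∑ t ∈ Finset.Ico (n+1) (n+1+m), ∑' k, M.FF A t j k * M.SS B (n+m-t) k)
            ≤ M.SS A n j := by
          refine le_trans ?_ (M.FF_block_le A n m j)
          refine Finset.sum_le_sum fun t ht => ?_
          refine ENNReal.tsum_le_tsum fun k => ?_
          exact (mul_le_mul_right (M.SS_le_one B _ _) _).trans_eq (mul_one _)
        calc u j ≤ M.SS B (n+m) j := iInf_le _ (n+m)
          _ ≤ M.SS A (n+m) j
              + ∑ t ∈ Finset.range (n+m+1), ∑' k, M.FF A t j k * M.SS B (n+m-t) k := d2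
          _ ≤ M.SS A n j + ((∑' p, g p * T m p) + M.SS A n j) := by
              rw [hsplit, ← hpart m]
              exact add_le_add (M.SS_antitone A j (by omega)) (add_le_add_right hpart2 _)
          _ = (∑' p, g p * T m p) + 2 * M.SS A n j := by ring
      have h5 : u j ≤ (⨅ m, ∑' p, g p * T m p) + 2 * M.SS A n j := by
        rw [ENNReal.iInf_add]
        exact le_iInf fun m => hm m
      have h6 : (⨅ m, ∑' p, g p * T m p) ≤ ∑' p, g p * ⨅ m, T m p :=
        dc g hgsum T hT1 hTanti
      have h7 : (∑' p : ℕ × ℕ, g p * ⨅ m, T m p) ≤ sA := by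
        have hptw : ∀ p : ℕ × ℕ, g p * (⨅ m, T m p) ≤ g p * sA := by
          intro p
          by_cases hgp : g p = 0
          · simp [hgp]
          · have hFF : M.FF A p.1 j p.2 ≠ 0 := by
              intro hzz
              apply hgp
              rw [hg]
              by_cases hp1 : p.1 ≤ n <;> simp [hp1, hzz]
            have hAk : A p.2 := by
              by_contra hAk
              exact hFF (M.FF_target A p.1 j p.2 hAk)
            have hk : p.2 < K := hAk
            have h1 : (⨅ m, T m p) ≤ u p.2 := by
              refine le_iInf fun n' => ?_
              exact (iInf_le _ n').trans (M.SS_antitone B p.2 (Nat.le_add_left n' _))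
            have h2 : u p.2 ≤ sA :=
              Finset.le_sup (f := u) (Finset.mem_range.mpr hk)
            exact mul_le_mul_right (h1.trans h2) _
        calc ∑' p : ℕ × ℕ, g p * ⨅ m, T m p ≤ ∑' p, g p * sA :=
              ENNReal.tsum_le_tsum hptw
          _ = (∑' p, g p) * sA := ENNReal.tsum_mul_right
          _ ≤ 1 * sA := mul_le_mul_left hgsum _
          _ = sA := one_mul _
      calc u j ≤ (⨅ m, ∑' p, g p * T m p) + 2 * M.SS A n j := h5
        _ ≤ sA + 2 * M.SS A n j := add_le_add_left (h6.trans h7) _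
    -- let n → ∞
    have h8 : u j - sA ≤ ⨅ n, 2 * M.SS A n j :=
      le_iInf fun n => tsub_le_iff_left.mpr (key n)
    have h9 : (⨅ n : ℕ, 2 * M.SS A n j) = 0 := by
      refine le_antisymm ?_ zero_le
      refine ENNReal.le_of_forall_pos_le_add fun ε hε _ => ?_
      have hε2 : (0:ℝ≥0∞) < (ε:ℝ≥0∞)/2 :=
        ENNReal.div_pos (by exact_mod_cast hε.ne') (by norm_num)
      have hlt : ⨅ n, M.SS A n j < (ε:ℝ≥0∞)/2 := by
        rw [hAzero j]; exact hε2
      obtain ⟨n, hn⟩ := iInf_lt_iff.mp hlt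
      calc ⨅ n : ℕ, 2 * M.SS A n j ≤ 2 * M.SS A n j := iInf_le _ n
        _ ≤ 2 * ((ε:ℝ≥0∞)/2) := mul_le_mul_right hn.le _
        _ = (ε:ℝ≥0∞) := ENNReal.mul_div_cancel' (by norm_num) (by norm_num)
        _ = 0 + (ε:ℝ≥0∞) := (zero_add _).symm
    have h10 : u j - sA = 0 := le_antisymm (h8.trans h9.le) zero_le
    exact tsub_eq_zero_iff_le.mp h10
  have hssA : s ≤ sA := iSup_le stepA
  -- Step B : contraction on the finite set
  have hm' : ∀ k : ℕ, ∃ n, M.SS B n k < 1 := fun k =>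
    M.SS_lt_one_of_reach B ⟨(hreach k i).choose, i, rfl, (hreach k i).choose_spec⟩
  set m := (Finset.range K).sup (fun k => (hm' k).choose) with hmdef
  set c := (Finset.range K).sup (fun k => M.SS B m k) with hcdef
  have hc1 : c < 1 := by
    rw [hcdef, Finset.sup_lt_iff (by norm_num : (⊥:ℝ≥0∞) < 1)]
    intro k hk
    exact lt_of_le_of_lt
      (M.SS_antitone B k (Finset.le_sup (f := fun k => (hm' k).choose) hk))
      (hm' k).choose_spec
  have hcle : ∀ k, k < K → M.SS B m k ≤ c := fun k hk =>
    Finset.le_sup (f := fun k => M.SS B m k) (Finset.mem_range.mpr hk)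
  have stepB : sA ≤ c * s := by
    refine Finset.sup_le fun k hk => ?_
    rw [Finset.mem_range] at hk
    have h1 : u k ≤ ⨅ n, ∑' l, M.DD B m k l * M.SS B n l := by
      refine le_iInf fun n => ?_
      rw [← M.SS_add B m n k]
      exact iInf_le _ (m+n)
    have hDsum : (∑' l, M.DD B m k l) ≤ 1 := by
      rw [← M.SS_eq_tsum_DD B m k]
      exact M.SS_le_one B m k
    have h2 : (⨅ n, ∑' l, M.DD B m k l * M.SS B n l) ≤ ∑' l, M.DD B m k l * u l :=
      dc (M.DD B m k) hDsum (fun n l => M.SS B n l) (fun n l => M.SS_le_one B n l)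
        (fun l => M.SS_antitone B l)
    have h3' : (∑' l, M.DD B m k l * u l) ≤ c * s := by
      calc ∑' l, M.DD B m k l * u l ≤ ∑' l, M.DD B m k l * s :=
            ENNReal.tsum_le_tsum fun l => mul_le_mul_right (le_iSup u l) _
        _ = (∑' l, M.DD B m k l) * s := ENNReal.tsum_mul_right
        _ = M.SS B m k * s := by rw [← M.SS_eq_tsum_DD B m k]
        _ ≤ c * s := mul_le_mul_left (hcle k hk) _
    exact h1.trans (h2.trans h3')
  have hs0 : s = 0 := by
    by_contra h
    have hlt : s < s :=
      calc s ≤ sA := hssA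
        _ ≤ c * s := stepB
        _ < 1 * s := (ENNReal.mul_lt_mul_iff_left h hstop).mpr hc1
        _ = s := one_mul s
    exact absurd hlt (lt_irrefl s)
  refine le_antisymm ?_ zero_le
  calc ⨅ n, M.SS B n j0 = u j0 := rfl
    _ ≤ s := le_iSup u j0
    _ = 0 := hs0


lemma hit_partial (i : ℕ) : ∀ n j,
    (∑ t ∈ Finset.range (n+1), M.hitAt i t j) + M.SS (· = i) n j = 1
  | 0, j => by
      rw [Finset.sum_range_one]
      by_cases h : j = i <;> simp [hitAt, SS, h]
  | (n+1), j => by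
      rw [Finset.sum_range_succ']
      by_cases h : j = i
      · have hz : ∀ t, M.hitAt i (t+1) j = 0 := fun t => by simp [hitAt, h]
        simp [hz, hitAt, h, M.SS_of_mem (· = i) (show i = i from rfl) (n+1)]
      · have h0 : M.hitAt i 0 j = 0 := by simp [hitAt, h]
        have hs : ∀ t, M.hitAt i (t+1) j = ∑' k, M.p j k * M.hitAt i t k :=
          fun t => by simp [hitAt, h]
        have hSS : M.SS (· = i) (n+1) j = ∑' k, M.p j k * M.SS (· = i) n k := by
          simp [SS, h]
        calc (∑ t ∈ Finset.range (n+1), M.hitAt i (t+1) j) + M.hitAt i 0 j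
              + M.SS (· = i) (n+1) j
            = (∑ t ∈ Finset.range (n+1), ∑' k, M.p j k * M.hitAt i t k)
              + ∑' k, M.p j k * M.SS (· = i) n k := by
              rw [h0, add_zero, hSS, Finset.sum_congr rfl fun t _ => hs t]
          _ = ∑' k, ((∑ t ∈ Finset.range (n+1), M.p j k * M.hitAt i t k)
              + M.p j k * M.SS (· = i) n k) := by
              rw [ENNReal.tsum_add, Summable.tsum_finsetSum (fun i _ => ENNReal.summable)]
          _ = ∑' k, M.p j k *
              ((∑ t ∈ Finset.range (n+1), M.hitAt i t k) + M.SS (· = i) n k) := by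
              congr 1; funext k
              rw [mul_add, Finset.mul_sum]
          _ = 1 := by
              simp only [fun k => hit_partial i n k, mul_one, M.row_sum j]

lemma hit_tsum_one (i j : ℕ) (hinf : ⨅ n, M.SS (· = i) n j = 0) :
    ∑' t, M.hitAt i t j = 1 := by
  refine le_antisymm ?_ ?_
  · rw [ENNReal.tsum_eq_iSup_nat]
    refine iSup_le fun n => ?_
    calc ∑ t ∈ Finset.range n, M.hitAt i t j
        ≤ ∑ t ∈ Finset.range (n+1), M.hitAt i t j :=
          Finset.sum_le_sum_of_subset (Finset.range_subset_range.mpr (Nat.le_succ n))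
      _ ≤ 1 := by
          rw [← M.hit_partial i n j]
          exact le_add_right le_rfl
  · have h1 : ∀ n, (1:ℝ≥0∞) ≤ (∑' t, M.hitAt i t j) + M.SS (· = i) n j := by
      intro n
      rw [← M.hit_partial i n j]
      exact add_le_add_left (ENNReal.sum_le_tsum _) _
    have h2 : (1:ℝ≥0∞) ≤ (∑' t, M.hitAt i t j) + ⨅ n, M.SS (· = i) n j := by
      rw [ENNReal.add_iInf]
      exact le_iInf h1
    rwa [hinf, add_zero] at h2


end MarkovChain

/-- an irreducible chain whose mean drifts are (finite and)
nonpositive for all `i ≥ N` is recurrent. -/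
theorem stmt2 (M : MarkovChain) (hirr : M.Irreducible) (N : ℕ) (hN : 1 ≤ N)
    (hfin : ∀ i, N ≤ i → M.DriftFinite i)
    (hdrift : ∀ i, N ≤ i → M.drift i ≤ 0) :
    M.Recurrent := by
  intro i
  have hmean : ∀ l, N ≤ l → ∑' k : ℕ, M.p l k * (k:ℝ≥0∞) ≤ (l:ℝ≥0∞) :=
    fun l hl => M.mean_le l (hfin l hl) (hdrift l hl)
  have hiz : ∀ j, ⨅ n, M.SS (· = i) n j = 0 :=
    M.iInf_SS_single_zero N hN hmean hirr i
  have hone : ∀ j, ∑' t, M.hitAt i t j = 1 := fun j => M.hit_tsum_one i j (hiz j)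
  calc ∑' n, M.firstReturn i n = ∑' n, ∑' k, M.p i k * M.hitAt i n k := rfl
    _ = ∑' k, ∑' n, M.p i k * M.hitAt i n k := ENNReal.tsum_comm
    _ = ∑' k, M.p i k * ∑' n, M.hitAt i n k := by
        congr 1; funext k; rw [ENNReal.tsum_mul_left]
    _ = ∑' k, M.p i k := by
        congr 1; funext k; rw [hone k, mul_one]
    _ = 1 := M.row_sum i
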